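/- arXiv:2407.15112 — 5 statements merged into one kernel-verified Lean document; each statement's English description precedes it below -/
import Mathlib

section
/- Let X be a Banach space in which, for every bounded linear operator T with ‖T‖ < 1, the function A_T(x) = (‖x‖² − ‖Tx‖²)^{1/2} defines a norm. Then for all x, y ∈ X with x Birkhoff-James orthogonal to y (i.e., ‖x + λy‖ ≥ ‖x‖ for all scalars λ), the Pythagorean identities ‖x+y‖² = ‖x‖² + ‖y‖² = ‖x−y‖² hold. -/
/-- `f` defines a norm on the complex vector space `X`. -/
def IsNorm {X : Type*} [NormedAddCommGroup X] [NormedSpace ℂ X] (f : X → ℝ) : Prop :=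
  (∀ x, 0 ≤ f x) ∧ (∀ x, f x = 0 ↔ x = 0) ∧
    (∀ (c : ℂ) (x : X), f (c • x) = ‖c‖ * f x) ∧ (∀ x y, f (x + y) ≤ f x + f y)

lemma my_sqrt_add_le (a b : ℝ) (ha : 0 ≤ a) (hb : 0 ≤ b) :
    Real.sqrt (a + b) ≤ Real.sqrt a + Real.sqrt b := by
  have h := Real.sqrt_le_sqrt (show a + b ≤ (Real.sqrt a + Real.sqrt b) ^ 2 by
    nlinarith [Real.sq_sqrt ha, Real.sq_sqrt hb, Real.sqrt_nonneg a, Real.sqrt_nonneg b])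
  rwa [Real.sqrt_sq (by positivity)] at h

/-- If `0 ≤ t*A + t²*Y` for all real `t`, with `Y ≥ 0`, then `A = 0`. -/
lemma lin0 (A Y : ℝ) (hY : 0 ≤ Y) (h : ∀ t : ℝ, 0 ≤ t * A + t ^ 2 * Y) : A = 0 := by
  rcases hY.eq_or_lt with hY0 | hY0
  · apply le_antisymm
    · nlinarith [h (-1)]
    · nlinarith [h 1]
  · have h1 := h (-(A / (2 * Y)))
    have h3 : -(A / (2 * Y)) * A + (-(A / (2 * Y))) ^ 2 * Y = -(A ^ 2 / (4 * Y)) := by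
      field_simp
      ring
    rw [h3] at h1
    have h4 : A ^ 2 / (4 * Y) ≤ 0 := by linarith
    have h5 : A ^ 2 ≤ 0 := by
      have h6 := mul_nonpos_of_nonpos_of_nonneg h4 (by positivity : (0:ℝ) ≤ 4 * Y)
      calc A ^ 2 = A ^ 2 / (4 * Y) * (4 * Y) := by field_simp
      _ ≤ 0 := h6
    have h7 : A ^ 2 = 0 := le_antisymm h5 (sq_nonneg A)
    exact sq_eq_zero_iff.mp h7

lemma sqrt_tri {X : Type*} [NormedAddCommGroup X] [NormedSpace ℂ X]
    (h : ∀ T : X →L[ℂ] X, ‖T‖ < 1 →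
      IsNorm (fun x => Real.sqrt (‖x‖ ^ 2 - ‖T x‖ ^ 2)))
    (g : X →L[ℂ] ℂ) (hg : ‖g‖ ≤ 1) (e : X) (he : ‖e‖ = 1) (u v : X) :
    Real.sqrt (‖u + v‖ ^ 2 - ‖g (u + v)‖ ^ 2) ≤
      Real.sqrt (‖u‖ ^ 2 - ‖g u‖ ^ 2) + Real.sqrt (‖v‖ ^ 2 - ‖g v‖ ^ 2) := by
  have gb : ∀ z : X, ‖g z‖ ≤ ‖z‖ := fun z => by
    calc ‖g z‖ ≤ ‖g‖ * ‖z‖ := g.le_opNorm z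
    _ ≤ ‖z‖ := by nlinarith [norm_nonneg z, norm_nonneg g]
  refine le_of_forall_pos_le_add fun ε hε => ?_
  set C : ℝ := ‖g u‖ + ‖g v‖ + 1 with hC
  have hC0 : 0 < C := by positivity
  set δ : ℝ := min 1 ((ε / C) ^ 2) with hδdef
  have hδ0 : 0 < δ := lt_min one_pos (by positivity)
  have hδ1 : δ ≤ 1 := min_le_left _ _
  set r : ℝ := Real.sqrt (1 - δ) with hrdef
  have hr0 : 0 ≤ r := Real.sqrt_nonneg _
  have hr2 : r ^ 2 = 1 - δ := Real.sq_sqrt (by linarith)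
  have hr1 : r < 1 := by nlinarith
  set T : X →L[ℂ] X := ContinuousLinearMap.smulRight g ((r : ℂ) • e) with hTdef
  have hre : ‖(r : ℂ) • e‖ = r := by
    rw [norm_smul, he, mul_one, Complex.norm_real, Real.norm_eq_abs, abs_of_nonneg hr0]
  have hTnorm : ‖T‖ < 1 := by
    rw [hTdef, ContinuousLinearMap.norm_smulRight_apply, hre]
    nlinarith [norm_nonneg g]
  have hT : ∀ z, ‖T z‖ ^ 2 = r ^ 2 * ‖g z‖ ^ 2 := by
    intro z
    rw [hTdef]
    simp only [ContinuousLinearMap.smulRight_apply]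
    rw [norm_smul, hre]
    ring
  have htri := (h T hTnorm).2.2.2 u v
  simp only [hT] at htri
  have key : ∀ z : X, Real.sqrt (‖z‖ ^ 2 - r ^ 2 * ‖g z‖ ^ 2) ≤
      Real.sqrt (‖z‖ ^ 2 - ‖g z‖ ^ 2) + (ε / C) * ‖g z‖ := by
    intro z
    have hz0 : 0 ≤ ‖z‖ ^ 2 - ‖g z‖ ^ 2 := by nlinarith [gb z, norm_nonneg (g z)]
    have h1 : ‖z‖ ^ 2 - r ^ 2 * ‖g z‖ ^ 2 = (‖z‖ ^ 2 - ‖g z‖ ^ 2) + δ * ‖g z‖ ^ 2 := by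
      rw [hr2]; ring
    rw [h1]
    have h2 := my_sqrt_add_le _ _ hz0 (by positivity : (0:ℝ) ≤ δ * ‖g z‖ ^ 2)
    have h3 : Real.sqrt (δ * ‖g z‖ ^ 2) ≤ (ε / C) * ‖g z‖ := by
      rw [Real.sqrt_mul hδ0.le, Real.sqrt_sq (norm_nonneg _)]
      have h4 : Real.sqrt δ ≤ ε / C := by
        calc Real.sqrt δ ≤ Real.sqrt ((ε / C) ^ 2) :=
          Real.sqrt_le_sqrt (min_le_right _ _)
        _ = ε / C := Real.sqrt_sq (by positivity)
      exact mul_le_mul_of_nonneg_right h4 (norm_nonneg _)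
    linarith
  have hmono : Real.sqrt (‖u + v‖ ^ 2 - ‖g (u + v)‖ ^ 2) ≤
      Real.sqrt (‖u + v‖ ^ 2 - r ^ 2 * ‖g (u + v)‖ ^ 2) := by
    apply Real.sqrt_le_sqrt
    nlinarith [norm_nonneg (g (u + v))]
  have hCle : (ε / C) * ‖g u‖ + (ε / C) * ‖g v‖ ≤ ε := by
    have h4 : (ε / C) * (‖g u‖ + ‖g v‖) ≤ (ε / C) * C := by
      apply mul_le_mul_of_nonneg_left _ (by positivity)
      rw [hC]; linarith
    have h5 : (ε / C) * C = ε := by field_simp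
    nlinarith
  calc Real.sqrt (‖u + v‖ ^ 2 - ‖g (u + v)‖ ^ 2)
      ≤ Real.sqrt (‖u + v‖ ^ 2 - r ^ 2 * ‖g (u + v)‖ ^ 2) := hmono
    _ ≤ Real.sqrt (‖u‖ ^ 2 - r ^ 2 * ‖g u‖ ^ 2) +
        Real.sqrt (‖v‖ ^ 2 - r ^ 2 * ‖g v‖ ^ 2) := htri
    _ ≤ (Real.sqrt (‖u‖ ^ 2 - ‖g u‖ ^ 2) + (ε / C) * ‖g u‖) +
        (Real.sqrt (‖v‖ ^ 2 - ‖g v‖ ^ 2) + (ε / C) * ‖g v‖) :=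
        add_le_add (key u) (key v)
    _ ≤ Real.sqrt (‖u‖ ^ 2 - ‖g u‖ ^ 2) + Real.sqrt (‖v‖ ^ 2 - ‖g v‖ ^ 2) + ε := by
        linarith

set_option maxHeartbeats 1000000 in
/-- If `A_T` defines a norm on `X` for every strict contraction `T`, then Birkhoff-James
orthogonality implies the Pythagorean identities `‖x+y‖² = ‖x‖² + ‖y‖² = ‖x−y‖²`. -/
theorem stmt_5 {X : Type*} [NormedAddCommGroup X] [NormedSpace ℂ X] [CompleteSpace X]
    (h : ∀ T : X →L[ℂ] X, ‖T‖ < 1 →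
      IsNorm (fun x => Real.sqrt (‖x‖ ^ 2 - ‖T x‖ ^ 2))) :
    ∀ x y : X, (∀ l : ℂ, ‖x‖ ≤ ‖x + l • y‖) →
      ‖x + y‖ ^ 2 = ‖x‖ ^ 2 + ‖y‖ ^ 2 ∧ ‖x - y‖ ^ 2 = ‖x‖ ^ 2 + ‖y‖ ^ 2 := by
  intro x y hxy
  by_cases h0 : x + y = 0
  · have hx0 : x = 0 := by
      have h1 := hxy 1
      rw [one_smul, h0, norm_zero] at h1
      exact norm_le_zero_iff.mp h1
    have hy0 : y = 0 := by
      have hy' : y = (x + y) - x := by abel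
      rw [hy', h0, hx0, sub_zero]
    subst hx0; subst hy0; simp
  · obtain ⟨g, hg1, hgxy0⟩ := exists_dual_vector ℂ (x + y) (norm_ne_zero_iff.mpr h0)
    have hgxy : g (x + y) = ((‖x + y‖ : ℝ) : ℂ) := by exact_mod_cast hgxy0
    have gb : ∀ z : X, ‖g z‖ ≤ ‖z‖ := fun z => by
      calc ‖g z‖ ≤ ‖g‖ * ‖z‖ := g.le_opNorm z
      _ = ‖z‖ := by rw [hg1, one_mul]
    set s : ℝ := ‖x + y‖ with hsdef
    have hs : 0 < s := norm_pos_iff.mpr h0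
    set e : X := s⁻¹ • (x + y) with hedef
    have he : ‖e‖ = 1 := by
      rw [hedef, norm_smul, Real.norm_eq_abs, abs_of_nonneg (by positivity : (0:ℝ) ≤ s⁻¹)]
      exact inv_mul_cancel₀ hs.ne'
    have nz : ∀ z : ℂ, ‖z‖ ^ 2 = z.re ^ 2 + z.im ^ 2 := fun z => by
      rw [Complex.sq_norm, Complex.normSq_apply]; ring
    have hsc : ‖((s : ℝ) : ℂ)‖ = s := by
      rw [Complex.norm_real, Real.norm_eq_abs, abs_of_nonneg hs.le]
    have hgs : ‖g (x + y)‖ ^ 2 = s ^ 2 := by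
      rw [hgxy, hsc]
    -- the key identity
    have hid : ∀ l : ℂ, ‖x + l • y‖ ^ 2 =
        ‖((s : ℂ) - g y) + l * g y‖ ^ 2 + ‖1 - l‖ ^ 2 * (‖y‖ ^ 2 - ‖g y‖ ^ 2) := by
      intro l
      set u : X := x + l • y with hudef
      set v : X := (1 - l) • y with hvdef
      have huv : u + v = x + y := by
        rw [hudef, hvdef, sub_smul, one_smul]; abel
      have hzero : Real.sqrt (‖x + y‖ ^ 2 - ‖g (x + y)‖ ^ 2) = 0 := by
        rw [hgs, ← hsdef, sub_self, Real.sqrt_zero]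
      have h1 : Real.sqrt (‖u‖ ^ 2 - ‖g u‖ ^ 2) ≤ Real.sqrt (‖v‖ ^ 2 - ‖g v‖ ^ 2) := by
        have h3 := sqrt_tri h g hg1.le e he (x + y) (-v)
        rw [show x + y + -v = u by rw [← huv]; abel] at h3
        rw [map_neg, norm_neg, norm_neg, hzero, zero_add] at h3
        exact h3
      have h2 : Real.sqrt (‖v‖ ^ 2 - ‖g v‖ ^ 2) ≤ Real.sqrt (‖u‖ ^ 2 - ‖g u‖ ^ 2) := by
        have h3 := sqrt_tri h g hg1.le e he (x + y) (-u)
        rw [show x + y + -u = v by rw [← huv]; abel] at h3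
        rw [map_neg, norm_neg, norm_neg, hzero, zero_add] at h3
        exact h3
      have heq : ‖u‖ ^ 2 - ‖g u‖ ^ 2 = ‖v‖ ^ 2 - ‖g v‖ ^ 2 := by
        have hu0 : 0 ≤ ‖u‖ ^ 2 - ‖g u‖ ^ 2 := by nlinarith [gb u, norm_nonneg (g u)]
        have hv0 : 0 ≤ ‖v‖ ^ 2 - ‖g v‖ ^ 2 := by nlinarith [gb v, norm_nonneg (g v)]
        have h12 := le_antisymm h1 h2
        calc ‖u‖ ^ 2 - ‖g u‖ ^ 2 = Real.sqrt (‖u‖ ^ 2 - ‖g u‖ ^ 2) ^ 2 :=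
          (Real.sq_sqrt hu0).symm
        _ = Real.sqrt (‖v‖ ^ 2 - ‖g v‖ ^ 2) ^ 2 := by rw [h12]
        _ = ‖v‖ ^ 2 - ‖g v‖ ^ 2 := Real.sq_sqrt hv0
      have hgu : g u = ((s : ℂ) - g y) + l * g y := by
        have hgx : g x = (s : ℂ) - g y := by
          have hadd : g (x + y) = g x + g y := map_add g x y
          rw [hgxy] at hadd
          linear_combination -hadd
        rw [hudef, map_add, map_smul, smul_eq_mul, hgx]
      have hvn : ‖v‖ ^ 2 = ‖1 - l‖ ^ 2 * ‖y‖ ^ 2 := by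
        rw [hvdef, norm_smul]; ring
      have hgv : ‖g v‖ ^ 2 = ‖1 - l‖ ^ 2 * ‖g y‖ ^ 2 := by
        rw [hvdef, map_smul, norm_smul]; ring
      have hfin : ‖u‖ ^ 2 = ‖g u‖ ^ 2 + (‖v‖ ^ 2 - ‖g v‖ ^ 2) := by linarith
      rw [hudef] at hfin
      rw [hfin, hgu, hvn, hgv]; ring
    set b1 : ℝ := (g y).re with hb1
    set b2 : ℝ := (g y).im with hb2
    set d : ℝ := ‖y‖ ^ 2 - ‖g y‖ ^ 2 with hd
    have hd0 : 0 ≤ d := by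
      rw [hd]
      nlinarith [gb y, norm_nonneg (g y)]
    have hidR : ∀ l : ℂ, ‖x + l • y‖ ^ 2 =
        (s - b1 + (l.re * b1 - l.im * b2)) ^ 2 + (-b2 + (l.re * b2 + l.im * b1)) ^ 2 +
          ((1 - l.re) ^ 2 + l.im ^ 2) * d := by
      intro l
      rw [hid l, nz, nz]
      simp only [Complex.add_re, Complex.add_im, Complex.sub_re, Complex.sub_im,
        Complex.mul_re, Complex.mul_im, Complex.one_re, Complex.one_im,
        Complex.ofReal_re, Complex.ofReal_im, hb1, hb2]
      ring
    have hx2 : ‖x‖ ^ 2 = (s - b1) ^ 2 + b2 ^ 2 + d := by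
      have h0' := hidR 0
      simp only [Complex.zero_re, Complex.zero_im, zero_smul, add_zero] at h0'
      rw [h0']; ring
    have hy2 : ‖y‖ ^ 2 = b1 ^ 2 + b2 ^ 2 + d := by
      have hnz := nz (g y)
      rw [← hb1, ← hb2] at hnz
      rw [hd]
      linarith
    have hBJ : ∀ l : ℂ, ‖x‖ ^ 2 ≤ ‖x + l • y‖ ^ 2 := fun l =>
      pow_le_pow_left₀ (norm_nonneg x) (hxy l) 2
    have hY : 0 ≤ b1 ^ 2 + b2 ^ 2 + d := by positivity
    -- b2 = 0
    have hb2z : b2 = 0 := by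
      have hA : -2 * (s * b2) = 0 := by
        apply lin0 _ _ hY
        intro t
        have h1 := hBJ ((t : ℂ) * Complex.I)
        rw [hidR] at h1
        simp only [Complex.mul_re, Complex.mul_im, Complex.I_re, Complex.I_im,
          Complex.ofReal_re, Complex.ofReal_im] at h1
        rw [hx2] at h1
        nlinarith [h1]
      have hs' : s ≠ 0 := hs.ne'
      have : s * b2 = 0 := by linarith
      rcases mul_eq_zero.mp this with h' | h'
      · exact absurd h' hs'
      · exact h'
    -- s * b1 = b1^2 + b2^2 + d
    have hb1v : s * b1 = b1 ^ 2 + b2 ^ 2 + d := by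
      have hA : 2 * ((s - b1) * b1 - b2 ^ 2 - d) = 0 := by
        apply lin0 _ _ hY
        intro t
        have h1 := hBJ ((t : ℝ) : ℂ)
        rw [hidR] at h1
        simp only [Complex.ofReal_re, Complex.ofReal_im] at h1
        rw [hx2] at h1
        nlinarith [h1]
      nlinarith [hA]
    have hsum : ‖x + y‖ ^ 2 = ‖x‖ ^ 2 + ‖y‖ ^ 2 := by
      rw [← hsdef, hx2, hy2]
      nlinarith [hb1v, hb2z]
    refine ⟨hsum, ?_⟩
    have hm : ‖x - y‖ ^ 2 = (s - 2 * b1) ^ 2 + (2 * b2) ^ 2 + 4 * d := by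
      have h1 := hidR (-1)
      rw [show x + (-1 : ℂ) • y = x - y by rw [neg_smul, one_smul, sub_eq_add_neg]] at h1
      simp only [Complex.neg_re, Complex.neg_im, Complex.one_re, Complex.one_im] at h1
      rw [h1]; ring
    rw [hm, hx2, hy2]
    nlinarith [hb1v, hb2z]
end

section
/- Let X be a Banach space and Y a closed proper subspace. Then Y is the kernel of a norm-one projection on X if and only if there exists a closed subspace Ỹ such that Ỹ is a vector space complement of Y in X and Ỹ is Birkhoff-James orthogonal to Y. -/
/-- A closed proper subspace `Y` of a Banach space `X` is the kernel of a norm-one projection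
iff there is a closed vector space complement `Z` of `Y` with `Z ⊥_B Y`. -/
theorem stmt_8 {X : Type*} [NormedAddCommGroup X] [NormedSpace ℂ X] [CompleteSpace X]
    (Y : Submodule ℂ X) (hYc : IsClosed (Y : Set X)) (hY : Y ≠ ⊤) :
    (∃ P : X →L[ℂ] X, P.comp P = P ∧ ‖P‖ = 1 ∧ LinearMap.ker (P : X →ₗ[ℂ] X) = Y) ↔
      (∃ Z : Submodule ℂ X, IsClosed (Z : Set X) ∧ IsCompl Y Z ∧
        ∀ z ∈ Z, ∀ y ∈ Y, ∀ l : ℂ, ‖z‖ ≤ ‖z + l • y‖) := by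
  constructor
  · rintro ⟨P, hidem, hnorm, hker⟩
    have hidem' : ∀ x, P (P x) = P x := fun x => congrArg (· x) hidem
    refine ⟨LinearMap.range (P : X →ₗ[ℂ] X), ?_, ?_, ?_⟩
    · have hs : (LinearMap.range (P : X →ₗ[ℂ] X) : Set X) =
        (LinearMap.ker ((ContinuousLinearMap.id ℂ X - P : X →L[ℂ] X) : X →ₗ[ℂ] X) : Set X) := by
        ext x
        simp only [SetLike.mem_coe, LinearMap.mem_range, LinearMap.mem_ker, ContinuousLinearMap.coe_coe,
          ContinuousLinearMap.coe_sub', Pi.sub_apply, ContinuousLinearMap.coe_id', id_eq,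
          sub_eq_zero]
        constructor
        · rintro ⟨w, rfl⟩; exact (hidem' w).symm
        · intro h; exact ⟨x, h.symm⟩
      rw [hs]
      exact ContinuousLinearMap.isClosed_ker (ContinuousLinearMap.id ℂ X - P)
    · constructor
      · rw [Submodule.disjoint_def]
        rintro x hx ⟨w, rfl⟩
        rw [← hker] at hx
        have h0 : P (P w) = 0 := hx
        rwa [hidem'] at h0
      · rw [codisjoint_iff, Submodule.eq_top_iff']
        intro x
        refine Submodule.mem_sup.2 ⟨x - P x, ?_, P x, ⟨x, rfl⟩, by abel⟩
        rw [← hker]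
        simp [LinearMap.mem_ker, hidem' x]
    · rintro z ⟨w, rfl⟩ y hy l
      rw [← hker] at hy
      have hPy : P y = 0 := hy
      calc ‖P w‖ = ‖P (P w + l • y)‖ := by
              rw [map_add, map_smul, hPy, smul_zero, add_zero, hidem']
        _ ≤ ‖P‖ * ‖P w + l • y‖ := P.le_opNorm _
        _ = ‖P w + l • y‖ := by rw [hnorm, one_mul]
  · rintro ⟨Z, hZc, hcompl, horth⟩
    set f : X →ₗ[ℂ] X := Z.subtype.comp (Z.linearProjOfIsCompl Y hcompl.symm) with hf
    have hfZ : ∀ x, f x ∈ Z := fun x => (Z.linearProjOfIsCompl Y hcompl.symm x).2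
    have hfY : ∀ x, x - f x ∈ Y := by
      intro x
      have h := Submodule.projection_add_projection_eq_self hcompl x
      have hx : x - f x = (Y.linearProjOfIsCompl Z hcompl x : X) := by
        simp only [hf, LinearMap.comp_apply, Submodule.subtype_apply]
        rw [eq_comm, eq_sub_iff_add_eq]; exact h
      rw [hx]
      exact (Y.linearProjOfIsCompl Z hcompl x).2
    have hffix : ∀ x ∈ Z, f x = x := by
      intro x hx
      simp only [hf, LinearMap.comp_apply, Submodule.subtype_apply]
      exact congrArg _ (Submodule.linearProjOfIsCompl_apply_left hcompl.symm ⟨x, hx⟩)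
    have hbound : ∀ x, ‖f x‖ ≤ 1 * ‖x‖ := by
      intro x
      have := horth (f x) (hfZ x) (x - f x) (hfY x) 1
      simpa using this
    set P : X →L[ℂ] X := f.mkContinuous 1 hbound with hP
    have hPapp : ∀ x, P x = f x := fun _ => rfl
    have hPidem : P.comp P = P := by
      ext x
      simp only [ContinuousLinearMap.comp_apply, hPapp]
      exact hffix _ (hfZ x)
    have hkerP : LinearMap.ker (P : X →ₗ[ℂ] X) = Y := by
      ext x
      simp only [LinearMap.mem_ker]
      rw [ContinuousLinearMap.coe_coe, hPapp]
      constructor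
      · intro h0
        have := hfY x
        rwa [h0, sub_zero] at this
      · intro hx
        simp only [hf, LinearMap.comp_apply, Submodule.subtype_apply]
        rw [show Z.linearProjOfIsCompl Y hcompl.symm x = 0 from
          Submodule.linearProjOfIsCompl_apply_right' hcompl.symm hx]
        rfl
    refine ⟨P, hPidem, ?_, hkerP⟩
    have hle : ‖P‖ ≤ 1 := f.mkContinuous_norm_le zero_le_one hbound
    have hZne : Z ≠ ⊥ := by
      intro hbot
      apply hY
      have := hcompl.sup_eq_top
      rwa [hbot, sup_bot_eq] at this
    obtain ⟨z, hz, hz0⟩ := Submodule.exists_mem_ne_zero_of_ne_bot hZne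
    have hzn : (0:ℝ) < ‖z‖ := norm_pos_iff.2 hz0
    have h1 : ‖z‖ ≤ ‖P‖ * ‖z‖ := by
      have := P.le_opNorm z
      rwa [hPapp, hffix z hz] at this
    have : 1 ≤ ‖P‖ := by
      nlinarith
    linarith
end

section
/- Let X be a reflexive Banach space and f a nonzero element of X*. Then f is a smooth point of X* (i.e., admits a unique norm-one support functional up to the canonical identification) if and only if the norm attainment set M_f = {x ∈ X : ‖x‖ = 1, |f(x)| = ‖f‖} equals {μ·x₀ : |μ| = 1} for some fixed unit vector x₀. -/
open NormedSpace

set_option synthInstance.maxHeartbeats 1000000 in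
set_option maxHeartbeats 1000000 in
/-- In a reflexive Banach space `X`, a nonzero `f ∈ X*` is a smooth point (it admits exactly
one support functional) iff its norm attainment set is `{μ • x₀ : |μ| = 1}` for some
fixed unit vector `x₀ ∈ X`. -/
theorem stmt_10 {X : Type*} [NormedAddCommGroup X] [NormedSpace ℂ X] [CompleteSpace X]
    (hrefl : Function.Surjective (inclusionInDoubleDual ℂ X))
    (f : StrongDual ℂ X) (hf : f ≠ 0) :
    (∃! φ : StrongDual ℂ (StrongDual ℂ X), ‖φ‖ = ‖f‖ ∧ φ f = (‖f‖ : ℂ) ^ 2) ↔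
      ∃ x₀ : X, ‖x₀‖ = 1 ∧
        {x : X | ‖x‖ = 1 ∧ ‖f x‖ = ‖f‖} = {x : X | ∃ μ : ℂ, ‖μ‖ = 1 ∧ x = μ • x₀} := by
  set J := inclusionInDoubleDual ℂ X with hJdef
  have hJnorm : ∀ x : X, ‖J x‖ = ‖x‖ := fun x => (inclusionInDoubleDualLi ℂ (E := X)).norm_map x
  have hJinj : Function.Injective J := by
    intro a b hab
    have h := hJnorm (a - b)
    rw [map_sub, hab, sub_self] at h
    exact (inclusionInDoubleDualLi ℂ (E := X)).injective hab
  have hfpos : (0:ℝ) < ‖f‖ := norm_pos_iff.mpr hf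
  have hfne : (‖f‖ : ℂ) ≠ 0 := by
    exact_mod_cast (ne_of_gt hfpos)
  have hnc : ‖(‖f‖ : ℂ)‖ = ‖f‖ := by
    rw [Complex.norm_real, norm_norm]
  constructor
  · rintro ⟨φ, ⟨hφn, hφf⟩, huniq⟩
    obtain ⟨x, hx⟩ := hrefl φ
    have hxn : ‖x‖ = ‖f‖ := by rw [← hJnorm x, hx, hφn]
    have hfx : f x = (‖f‖ : ℂ) ^ 2 := by
      have := dual_def ℂ X x f
      rw [hx, hφf] at this
      exact this.symm
    refine ⟨((‖f‖ : ℂ))⁻¹ • x, ?_, ?_⟩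
    · rw [norm_smul, norm_inv, hnc, hxn, inv_mul_cancel₀ (ne_of_gt hfpos)]
    · ext y
      constructor
      · rintro ⟨hy1, hy2⟩
        set c := f y with hc
        have hcn : ‖c‖ = ‖f‖ := hy2
        have hcne : c ≠ 0 := by
          intro h; rw [h, norm_zero] at hcn; exact (ne_of_gt hfpos) hcn.symm
        -- z realizes the support functional
        set z := ((‖f‖ : ℂ) ^ 2 / c) • y with hz
        have hfz : f z = (‖f‖ : ℂ) ^ 2 := by
          rw [hz, map_smul, smul_eq_mul, ← hc, div_mul_cancel₀ _ hcne]
        have hzn : ‖z‖ = ‖f‖ := by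
          rw [hz, norm_smul, hy1, mul_one, norm_div, norm_pow, hnc, hcn, sq,
            mul_div_assoc, div_self (ne_of_gt hfpos), mul_one]
        have hJz : J z = φ := by
          apply huniq
          refine ⟨by rw [hJnorm, hzn], ?_⟩
          rw [dual_def, hfz]
        have hzx : z = x := hJinj (by rw [hJz, hx])
        refine ⟨c / (‖f‖ : ℂ), by rw [norm_div, hcn, hnc, div_self (ne_of_gt hfpos)], ?_⟩
        rw [smul_smul, ← hzx, hz, smul_smul]
        have hs : c / (‖f‖:ℂ) * ((‖f‖:ℂ))⁻¹ * ((‖f‖:ℂ)^2 / c) = 1 := by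
          field_simp
        rw [hs, one_smul]
      · rintro ⟨μ, hμ, rfl⟩
        constructor
        · rw [norm_smul, hμ, one_mul, norm_smul, norm_inv, hnc, hxn,
            inv_mul_cancel₀ (ne_of_gt hfpos)]
        · rw [map_smul, smul_eq_mul, map_smul, smul_eq_mul, hfx, norm_mul, hμ, one_mul,
            norm_mul, norm_inv, hnc, norm_pow, hnc, sq, ← mul_assoc,
            inv_mul_cancel₀ (ne_of_gt hfpos), one_mul]
  · rintro ⟨x₀, hx₀, hset⟩
    have hx₀mem : x₀ ∈ {x : X | ‖x‖ = 1 ∧ ‖f x‖ = ‖f‖} := by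
      rw [hset]; exact ⟨1, by simp, by simp⟩
    have hfx₀ : ‖f x₀‖ = ‖f‖ := hx₀mem.2
    have hfx₀ne : f x₀ ≠ 0 := by
      intro h; rw [h, norm_zero] at hfx₀; exact (ne_of_gt hfpos) hfx₀.symm
    have key : ∀ ψ : StrongDual ℂ (StrongDual ℂ X), (‖ψ‖ = ‖f‖ ∧ ψ f = (‖f‖ : ℂ) ^ 2) →
        ψ = J (((‖f‖ : ℂ) ^ 2 / f x₀) • x₀) := by
      rintro ψ ⟨hψn, hψf⟩
      obtain ⟨x, hx⟩ := hrefl ψ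
      have hxn : ‖x‖ = ‖f‖ := by rw [← hJnorm x, hx, hψn]
      have hfx : f x = (‖f‖ : ℂ) ^ 2 := by
        have := dual_def ℂ X x f
        rw [hx, hψf] at this
        exact this.symm
      set y := ((‖f‖ : ℂ))⁻¹ • x with hy
      have hymem : y ∈ {x : X | ‖x‖ = 1 ∧ ‖f x‖ = ‖f‖} := by
        constructor
        · rw [hy, norm_smul, norm_inv, hnc, hxn, inv_mul_cancel₀ (ne_of_gt hfpos)]
        · rw [hy, map_smul, smul_eq_mul, hfx, sq, ← mul_assoc, inv_mul_cancel₀ hfne,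
            one_mul, hnc]
      rw [hset] at hymem
      obtain ⟨μ, hμ, hyx⟩ := hymem
      have hfy : f y = (‖f‖ : ℂ) := by
        rw [hy, map_smul, smul_eq_mul, hfx, sq, ← mul_assoc, inv_mul_cancel₀ hfne, one_mul]
      have hμval : μ * f x₀ = (‖f‖ : ℂ) := by
        rw [← hfy, hyx, map_smul, smul_eq_mul]
      have hxval : x = ((‖f‖ : ℂ) ^ 2 / f x₀) • x₀ := by
        have : x = (‖f‖ : ℂ) • y := by
          rw [hy, smul_smul, mul_inv_cancel₀ hfne, one_smul]
        rw [this, hyx, smul_smul]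
        congr 1
        field_simp
        exact hμval
      rw [← hx, hxval]
    -- existence: J ((‖f‖² / f x₀) • x₀) is a support functional
    set x := ((‖f‖ : ℂ) ^ 2 / f x₀) • x₀ with hxdef
    have hxn : ‖x‖ = ‖f‖ := by
      rw [hxdef, norm_smul, hx₀, mul_one, norm_div, norm_pow, hnc, hfx₀, sq,
        mul_div_assoc, div_self (ne_of_gt hfpos), mul_one]
    have hfxv : f x = (‖f‖ : ℂ) ^ 2 := by
      rw [hxdef, map_smul, smul_eq_mul, div_mul_cancel₀ _ hfx₀ne]
    have hP1 : ‖J x‖ = ‖f‖ := by rw [hJnorm, hxn]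
    have hP2 : J x f = (‖f‖ : ℂ) ^ 2 := by rw [dual_def, hfxv]
    exact ⟨J x, ⟨hP1, hP2⟩, fun ψ hψ => (key ψ hψ).trans (key _ ⟨hP1, hP2⟩).symm⟩
end

section
/- Let X be a Banach space, T a strict contraction on X such that A_T(x) = (‖x‖² − ‖Tx‖²)^{1/2} is a norm on X. Then for every n ≥ 2, the function A_{T^n}(x) = (‖x‖² − ‖T^n x‖²)^{1/2} also defines a norm on X. -/
/-- If `T` is a strict contraction on a Banach space `X` and `A_T` is a norm on `X`,
then `A_{Tⁿ}` is also a norm on `X` for all `n ≥ 2`. -/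
theorem stmt_15 {X : Type*} [NormedAddCommGroup X] [NormedSpace ℂ X] [CompleteSpace X]
    (T : X →L[ℂ] X) (hT : ‖T‖ < 1)
    (hnorm : IsNorm (fun x => Real.sqrt (‖x‖ ^ 2 - ‖T x‖ ^ 2))) :
    ∀ n : ℕ, 2 ≤ n → IsNorm (fun x => Real.sqrt (‖x‖ ^ 2 - ‖(T ^ n) x‖ ^ 2)) := by
  intro n hn
  have hTc : ∀ x : X, ‖T x‖ ≤ ‖x‖ := by
    intro x
    calc ‖T x‖ ≤ ‖T‖ * ‖x‖ := T.le_opNorm x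
      _ ≤ 1 * ‖x‖ := mul_le_mul_of_nonneg_right hT.le (norm_nonneg x)
      _ = ‖x‖ := one_mul _
  set A : X → ℝ := fun x => Real.sqrt (‖x‖ ^ 2 - ‖T x‖ ^ 2) with hAdef
  have hA0 : ∀ z, 0 ≤ A z := fun z => Real.sqrt_nonneg _
  have hA_sq : ∀ x : X, A x ^ 2 = ‖x‖ ^ 2 - ‖T x‖ ^ 2 := by
    intro x
    exact Real.sq_sqrt (by nlinarith [hTc x, norm_nonneg x, norm_nonneg (T x)])
  have hpow : ∀ (k : ℕ) (x : X), (T ^ (k + 1)) x = T ((T ^ k) x) := by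
    intro k x
    rw [pow_succ']
    rfl
  have hpown : ∀ (k : ℕ) (x : X), ‖(T ^ k) x‖ ≤ ‖T‖ ^ k * ‖x‖ := by
    intro k
    induction k with
    | zero => intro x; simp
    | succ m ih =>
      intro x
      rw [hpow]
      calc ‖T ((T ^ m) x)‖ ≤ ‖T‖ * ‖(T ^ m) x‖ := T.le_opNorm _
        _ ≤ ‖T‖ * (‖T‖ ^ m * ‖x‖) :=
            mul_le_mul_of_nonneg_left (ih x) (norm_nonneg T)
        _ = ‖T‖ ^ (m + 1) * ‖x‖ := by ring
  have hsum : ∀ x : X,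
      ∑ k ∈ Finset.range n, A ((T ^ k) x) ^ 2 = ‖x‖ ^ 2 - ‖(T ^ n) x‖ ^ 2 := by
    intro x
    have h1 : ∀ k, A ((T ^ k) x) ^ 2 = ‖(T ^ k) x‖ ^ 2 - ‖(T ^ (k + 1)) x‖ ^ 2 := by
      intro k; rw [hA_sq, hpow]
    simp_rw [h1]
    rw [Finset.sum_range_sub' (fun k => ‖(T ^ k) x‖ ^ 2) n]
    simp
  have hradnn : ∀ x : X, 0 ≤ ‖x‖ ^ 2 - ‖(T ^ n) x‖ ^ 2 := by
    intro x
    rw [← hsum x]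
    exact Finset.sum_nonneg fun k _ => sq_nonneg _
  refine ⟨fun x => Real.sqrt_nonneg _, ?_, ?_, ?_⟩
  · intro x
    constructor
    · intro h
      by_contra hx
      have hx0 : 0 < ‖x‖ := norm_pos_iff.mpr hx
      have hlt : ‖(T ^ n) x‖ < ‖x‖ := by
        have h1 : ‖T‖ ^ n < 1 :=
          pow_lt_one₀ (norm_nonneg T) hT (by omega)
        calc ‖(T ^ n) x‖ ≤ ‖T‖ ^ n * ‖x‖ := hpown n x
          _ < 1 * ‖x‖ := by
              exact mul_lt_mul_of_pos_right h1 hx0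
          _ = ‖x‖ := one_mul _
      have hpos : 0 < ‖x‖ ^ 2 - ‖(T ^ n) x‖ ^ 2 := by nlinarith [norm_nonneg ((T ^ n) x)]
      have := Real.sqrt_pos.mpr hpos
      simp only at h
      linarith [h ▸ this]
    · intro h; subst h; simp
  · intro c x
    simp only [map_smul, norm_smul]
    have h1 : (‖c‖ * ‖x‖) ^ 2 - (‖c‖ * ‖(T ^ n) x‖) ^ 2
        = ‖c‖ ^ 2 * (‖x‖ ^ 2 - ‖(T ^ n) x‖ ^ 2) := by ring
    rw [h1, Real.sqrt_mul (sq_nonneg _), Real.sqrt_sq (norm_nonneg c)]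
  · intro x y
    have hAt : ∀ a b : X, A (a + b) ≤ A a + A b := hnorm.2.2.2
    set u : EuclideanSpace ℝ (Fin n) := WithLp.toLp 2 (fun k : Fin n => A ((T ^ (k : ℕ)) x)) with hu
    set v : EuclideanSpace ℝ (Fin n) := WithLp.toLp 2 (fun k : Fin n => A ((T ^ (k : ℕ)) y)) with hv
    have hnu : ‖u‖ = Real.sqrt (‖x‖ ^ 2 - ‖(T ^ n) x‖ ^ 2) := by
      rw [EuclideanSpace.norm_eq, ← hsum x, ← Fin.sum_univ_eq_sum_range]
      congr 1
      refine Finset.sum_congr rfl fun i _ => ?_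
      rw [Real.norm_eq_abs, sq_abs]
    have hnv : ‖v‖ = Real.sqrt (‖y‖ ^ 2 - ‖(T ^ n) y‖ ^ 2) := by
      rw [EuclideanSpace.norm_eq, ← hsum y, ← Fin.sum_univ_eq_sum_range]
      congr 1
      refine Finset.sum_congr rfl fun i _ => ?_
      rw [Real.norm_eq_abs, sq_abs]
    calc Real.sqrt (‖x + y‖ ^ 2 - ‖(T ^ n) (x + y)‖ ^ 2)
        ≤ ‖u + v‖ := by
          rw [← hsum (x + y), EuclideanSpace.norm_eq,
            ← Fin.sum_univ_eq_sum_range (fun k => A ((T ^ k) (x + y)) ^ 2) n]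
          apply Real.sqrt_le_sqrt
          apply Finset.sum_le_sum
          intro i _
          have h1 : A ((T ^ (i : ℕ)) (x + y)) ≤ (u + v) i := by
            have h2 := hAt ((T ^ (i : ℕ)) x) ((T ^ (i : ℕ)) y)
            have h3 : (T ^ (i : ℕ)) (x + y) = (T ^ (i : ℕ)) x + (T ^ (i : ℕ)) y :=
              map_add _ _ _
            rw [h3]
            simpa [hu, hv] using h2
          calc A ((T ^ (i : ℕ)) (x + y)) ^ 2 ≤ ((u + v) i) ^ 2 := by
                nlinarith [hA0 ((T ^ (i : ℕ)) (x + y)), hA0 ((T ^ (i : ℕ)) x),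
                  hA0 ((T ^ (i : ℕ)) y)]
            _ = ‖(u + v) i‖ ^ 2 := by rw [Real.norm_eq_abs, sq_abs]
      _ ≤ ‖u‖ + ‖v‖ := norm_add_le u v
      _ = _ := by rw [hnu, hnv]
end

section
/- Let X be a Banach space and T the operator on ℓ¹(ℕ, ℂ) (or any ℓ₁ sequence space) defined by T(x₁, x₂, x₃, x₄, …) = (λ₁(x₁ − x₂), λ₂ x₃, λ₃ x₄, …) where λ_n = (2n−1)/(2n). Then ‖T‖ = 1, and ‖T(x)‖ < ‖x‖ for every nonzero x, yet the function A_T(x) = (‖x‖² − ‖Tx‖²)^{1/2} fails the triangle inequality at the standard basis vectors e₁ and e₂ and hence is not a norm. -/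
noncomputable section Stmt18Aux

namespace Stmt18

abbrev L1 : Type := lp (fun _ : ℕ => ℂ) 1

def r (n : ℕ) : ℝ := (2 * n + 1) / (2 * n + 2)

lemma r_nonneg (n : ℕ) : 0 ≤ r n := by
  unfold r; positivity

lemma r_lt_one (n : ℕ) : r n < 1 := by
  unfold r
  rw [div_lt_one (by positivity)]
  linarith

lemma r_le_one (n : ℕ) : r n ≤ 1 := (r_lt_one n).le

def g (x : ℕ → ℂ) : ℕ → ℂ := fun n =>
  if n = 0 then (1 / 2 : ℂ) * (x 0 - x 1) else (r n : ℂ) * x (n + 2)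

lemma norm_r_coe (n : ℕ) : ‖(r n : ℂ)‖ = r n := by
  rw [Complex.norm_real, Real.norm_of_nonneg (r_nonneg n)]

lemma g_add (x y : ℕ → ℂ) : g (x + y) = g x + g y := by
  funext n
  simp only [g, Pi.add_apply]
  split <;> ring

lemma g_smul (c : ℂ) (x : ℕ → ℂ) : g (c • x) = c • g x := by
  funext n
  simp only [g, Pi.smul_apply, smul_eq_mul]
  split <;> ring

lemma summable_norm (x : L1) : Summable fun n => ‖x n‖ := by
  have := (lp.memℓp x).summable (p := 1) (by norm_num)
  simpa using this

lemma norm_eq_tsum (x : L1) : ‖x‖ = ∑' n, ‖x n‖ := by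
  have := lp.hasSum_norm (p := 1) (by norm_num) x
  simp only [ENNReal.toReal_one, Real.rpow_one] at this
  exact this.tsum_eq.symm

lemma summable_g (x : L1) : Summable fun n => ‖g x n‖ := by
  apply (summable_nat_add_iff (f := fun n => ‖g x n‖) 1).1
  have h3 : Summable fun n => ‖x (n + 3)‖ :=
    (summable_nat_add_iff (f := fun n => ‖x n‖) 3).2 (summable_norm x)
  refine Summable.of_nonneg_of_le (fun n => norm_nonneg _) (fun n => ?_) h3
  simp only [g, Nat.succ_ne_zero, if_false, norm_mul, norm_r_coe]
  calc r (n + 1) * ‖x (n + 1 + 2)‖ ≤ 1 * ‖x (n + 1 + 2)‖ := by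
        apply mul_le_mul_of_nonneg_right (r_le_one _) (norm_nonneg _)
    _ = ‖x (n + 3)‖ := by norm_num

lemma memℓp_g (x : L1) : Memℓp (g x) 1 := by
  apply memℓp_gen
  simpa using summable_g x

/-- tsum of ‖x‖ split off three terms -/
lemma tsum_x_split (x : L1) :
    ∑' n, ‖x n‖ = ‖x 0‖ + ‖x 1‖ + ‖x 2‖ + ∑' n, ‖x (n + 3)‖ := by
  have h0 := summable_norm x
  have h1 : Summable fun n => ‖x (n + 1)‖ := (summable_nat_add_iff (f := fun n => ‖x n‖) 1).2 h0
  have h2 : Summable fun n => ‖x (n + 2)‖ := (summable_nat_add_iff (f := fun n => ‖x n‖) 2).2 h0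
  have e2' : ∑' n, ‖x (n+1+1)‖ = ∑' n, ‖x (n+2)‖ := tsum_congr fun n => by norm_num
  have e3' : ∑' n, ‖x (n+2+1)‖ = ∑' n, ‖x (n+3)‖ := tsum_congr fun n => by norm_num
  rw [Summable.tsum_eq_zero_add h0, Summable.tsum_eq_zero_add h1, e2', Summable.tsum_eq_zero_add h2, e3']
  norm_num
  ring

lemma tsum_g_split (x : L1) :
    ∑' n, ‖g x n‖ = ‖g x 0‖ + ∑' n, r (n + 1) * ‖x (n + 3)‖ := by
  rw [Summable.tsum_eq_zero_add (summable_g x)]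
  congr 1
  apply tsum_congr
  intro n
  have : g x (n+1) = (r (n+1) : ℂ) * x (n+3) := by simp [g]
  rw [this, norm_mul, norm_r_coe]

lemma norm_g0_le (x : L1) : ‖g x 0‖ ≤ (1 / 2) * (‖x 0‖ + ‖x 1‖) := by
  have hg : g x 0 = (1/2 : ℂ) * (x 0 - x 1) := by simp [g]
  rw [hg, norm_mul]
  have : ‖x 0 - x 1‖ ≤ ‖x 0‖ + ‖x 1‖ := norm_sub_le _ _
  calc ‖(1/2 : ℂ)‖ * ‖x 0 - x 1‖ = (1/2) * ‖x 0 - x 1‖ := by norm_num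
    _ ≤ (1/2) * (‖x 0‖ + ‖x 1‖) := by linarith

lemma summable_tail_g (x : L1) : Summable fun n => r (n + 1) * ‖x (n + 3)‖ := by
  have h3 : Summable fun n => ‖x (n + 3)‖ :=
    (summable_nat_add_iff (f := fun n => ‖x n‖) 3).2 (summable_norm x)
  refine Summable.of_nonneg_of_le (fun n => mul_nonneg (r_nonneg _) (norm_nonneg _)) (fun n => ?_) h3
  calc r (n + 1) * ‖x (n + 3)‖ ≤ 1 * ‖x (n + 3)‖ :=
        mul_le_mul_of_nonneg_right (r_le_one _) (norm_nonneg _)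
    _ = ‖x (n + 3)‖ := one_mul _

lemma tail_le (x : L1) : ∑' n, r (n + 1) * ‖x (n + 3)‖ ≤ ∑' n, ‖x (n + 3)‖ := by
  have h3 : Summable fun n => ‖x (n + 3)‖ :=
    (summable_nat_add_iff (f := fun n => ‖x n‖) 3).2 (summable_norm x)
  refine Summable.tsum_le_tsum (fun n => ?_) (summable_tail_g x) h3
  calc r (n + 1) * ‖x (n + 3)‖ ≤ 1 * ‖x (n + 3)‖ :=
        mul_le_mul_of_nonneg_right (r_le_one _) (norm_nonneg _)
    _ = ‖x (n + 3)‖ := one_mul _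

lemma tsum_g_le (x : L1) : ∑' n, ‖g x n‖ ≤ ∑' n, ‖x n‖ := by
  rw [tsum_g_split, tsum_x_split]
  have h0 := norm_g0_le x
  have ht := tail_le x
  have : (0:ℝ) ≤ ‖x 0‖ := norm_nonneg _
  have : (0:ℝ) ≤ ‖x 1‖ := norm_nonneg _
  have : (0:ℝ) ≤ ‖x 2‖ := norm_nonneg _
  linarith

lemma tsum_g_lt (x : L1) (hx : x ≠ 0) : ∑' n, ‖g x n‖ < ∑' n, ‖x n‖ := by
  have hex : ∃ k, x k ≠ 0 := by
    by_contra h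
    push_neg at h
    exact hx (lp.ext (funext fun n => by simpa using h n))
  obtain ⟨k, hk⟩ := hex
  rw [tsum_g_split, tsum_x_split]
  have hg0 := norm_g0_le x
  have htail := tail_le x
  have n0 : (0:ℝ) ≤ ‖x 0‖ := norm_nonneg _
  have n1 : (0:ℝ) ≤ ‖x 1‖ := norm_nonneg _
  have n2 : (0:ℝ) ≤ ‖x 2‖ := norm_nonneg _
  by_cases h012 : x 0 ≠ 0 ∨ x 1 ≠ 0 ∨ x 2 ≠ 0
  · rcases h012 with h | h | h
    · have : 0 < ‖x 0‖ := norm_pos_iff.2 h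
      linarith
    · have : 0 < ‖x 1‖ := norm_pos_iff.2 h
      linarith
    · have : 0 < ‖x 2‖ := norm_pos_iff.2 h
      linarith
  · push_neg at h012
    obtain ⟨h0, h1, h2⟩ := h012
    obtain ⟨m, rfl⟩ : ∃ m, k = m + 3 := by
      refine ⟨k - 3, ?_⟩
      rcases Nat.lt_or_ge k 3 with hlt | hge
      · interval_cases k <;> simp_all
      · omega
    have hpos : 0 < ‖x (m + 3)‖ := norm_pos_iff.2 hk
    have hstrict : ∑' n, r (n + 1) * ‖x (n + 3)‖ < ∑' n, ‖x (n + 3)‖ := by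
      have h3 : Summable fun n => ‖x (n + 3)‖ :=
        (summable_nat_add_iff (f := fun n => ‖x n‖) 3).2 (summable_norm x)
      refine Summable.tsum_lt_tsum_of_nonneg (i := m)
        (fun b => mul_nonneg (r_nonneg _) (norm_nonneg _)) (fun b => ?_) ?_ h3
      · calc r (b + 1) * ‖x (b + 3)‖ ≤ 1 * ‖x (b + 3)‖ :=
            mul_le_mul_of_nonneg_right (r_le_one _) (norm_nonneg _)
          _ = ‖x (b + 3)‖ := one_mul _
      · calc r (m + 1) * ‖x (m + 3)‖ < 1 * ‖x (m + 3)‖ :=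
            (mul_lt_mul_of_pos_right (r_lt_one _) hpos)
          _ = ‖x (m + 3)‖ := one_mul _
    linarith

def Lmap : L1 →ₗ[ℂ] L1 where
  toFun x := ⟨g x, memℓp_g x⟩
  map_add' x y := by
    apply lp.ext
    show g (↑(x + y)) = g x + g y
    rw [lp.coeFn_add, g_add]
  map_smul' c x := by
    apply lp.ext
    show g (↑(c • x)) = c • g x
    rw [lp.coeFn_smul, g_smul]

lemma Lmap_bound (x : L1) : ‖Lmap x‖ ≤ 1 * ‖x‖ := by
  rw [one_mul, norm_eq_tsum, norm_eq_tsum]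
  exact tsum_g_le x

def T : L1 →L[ℂ] L1 := Lmap.mkContinuous 1 Lmap_bound

lemma T_apply (x : L1) (n : ℕ) : (T x) n = g x n := rfl

lemma norm_T_apply_eq (x : L1) : ‖T x‖ = ∑' n, ‖g x n‖ := by
  rw [norm_eq_tsum]
  rfl

lemma T_strict (x : L1) (hx : x ≠ 0) : ‖T x‖ < ‖x‖ := by
  rw [norm_T_apply_eq, norm_eq_tsum]
  exact tsum_g_lt x hx

lemma T_norm_le : ‖T‖ ≤ 1 := Lmap.mkContinuous_norm_le (by norm_num) Lmap_bound

lemma T_single (k : ℕ) :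
    T (lp.single 1 (k + 3) (1 : ℂ)) = lp.single 1 (k + 1) ((r (k + 1) : ℂ)) := by
  apply lp.ext
  funext n
  have hco : ∀ j, (lp.single 1 (k + 3) (1 : ℂ) : ∀ _ : ℕ, ℂ) j
      = if j = k + 3 then 1 else 0 := by
    intro j
    by_cases h : j = k + 3
    · subst h; simp [lp.single_apply_self]
    · rw [if_neg h]
      exact lp.single_apply_ne (E := fun _ : ℕ => ℂ) 1 (k + 3) (1:ℂ) h
  show g (lp.single 1 (k + 3) (1 : ℂ)) n = _
  match n with
  | 0 =>
    have : g (lp.single 1 (k + 3) (1 : ℂ)) 0 = (1/2 : ℂ) *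
        ((lp.single 1 (k + 3) (1:ℂ) : ∀ _ : ℕ, ℂ) 0 - (lp.single 1 (k + 3) (1:ℂ) : ∀ _ : ℕ, ℂ) 1) := by
      simp [g]
    rw [this, hco 0, hco 1]
    rw [lp.single_apply_ne 1 (k + 1) _ (by omega : (0:ℕ) ≠ k + 1)]
    norm_num
  | (m + 1) =>
    have : g (lp.single 1 (k + 3) (1 : ℂ)) (m + 1)
        = (r (m + 1) : ℂ) * (lp.single 1 (k + 3) (1:ℂ) : ∀ _ : ℕ, ℂ) (m + 3) := by
      simp [g]
    rw [this, hco (m + 3)]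
    by_cases hm : m = k
    · subst hm
      simp [lp.single_apply_self]
    · rw [if_neg (by omega : ¬ m + 3 = k + 3),
        lp.single_apply_ne 1 (k + 1) _ (by omega : m + 1 ≠ k + 1)]
      ring

lemma norm_single_one (i : ℕ) (a : ℂ) : ‖lp.single (E := fun _ : ℕ => ℂ) 1 i a‖ = ‖a‖ := by
  have := lp.norm_single (E := fun _ : ℕ => ℂ) (p := 1) (by norm_num) i a
  simpa using this

lemma T_norm_ge : 1 ≤ ‖T‖ := by
  have key : ∀ k : ℕ, r (k + 1) ≤ ‖T‖ := by
    intro k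
    have h1 : ‖lp.single (E := fun _ : ℕ => ℂ) 1 (k + 3) (1 : ℂ)‖ = 1 := by
      rw [norm_single_one]; simp
    have h2 : ‖T (lp.single 1 (k + 3) (1 : ℂ))‖ = r (k + 1) := by
      rw [T_single, norm_single_one, norm_r_coe]
    calc r (k + 1) = ‖T (lp.single 1 (k + 3) (1 : ℂ))‖ := h2.symm
      _ ≤ ‖T‖ * ‖lp.single (E := fun _ : ℕ => ℂ) 1 (k + 3) (1 : ℂ)‖ := T.le_opNorm _
      _ = ‖T‖ := by rw [h1, mul_one]
  have hre : ∀ k : ℕ, r (k + 1) = 1 - 1 / (2 * (k : ℝ) + 4) := by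
    intro k
    unfold r
    push_cast
    rw [eq_sub_iff_add_eq]
    field_simp
    ring
  have h4 : Filter.Tendsto (fun k : ℕ => 2 * (k : ℝ) + 4) Filter.atTop Filter.atTop := by
    apply Filter.tendsto_atTop_add_const_right
    exact Filter.Tendsto.const_mul_atTop (by norm_num) tendsto_natCast_atTop_atTop
  have h5 : Filter.Tendsto (fun k : ℕ => 1 - 1 / (2 * (k : ℝ) + 4)) Filter.atTop (nhds 1) := by
    have h6 := h4.inv_tendsto_atTop
    have h7 := (tendsto_const_nhds (x := (1:ℝ)) (f := Filter.atTop (α := ℕ))).sub h6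
    simpa [one_div] using h7
  have lim : Filter.Tendsto (fun k : ℕ => r (k + 1)) Filter.atTop (nhds 1) :=
    Filter.Tendsto.congr (fun k => (hre k).symm) h5
  exact le_of_tendsto' lim key

lemma T_norm : ‖T‖ = 1 := le_antisymm T_norm_le T_norm_ge

lemma coe_cast (n : ℕ) : ((r n : ℝ) : ℂ) = (2 * (n : ℂ) + 1) / (2 * (n : ℂ) + 2) := by
  unfold r
  push_cast
  ring

end Stmt18
end Stmt18Aux

open Stmt18

/-- The operator `T` on `ℓ¹(ℕ, ℂ)` given by
`T(x₁, x₂, x₃, x₄, …) = (λ₁(x₁ − x₂), λ₂x₃, λ₃x₄, …)` with `λₙ = (2n−1)/(2n)`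
(indices here are 0-based, so `(Tx)₀ = (1/2)(x₀ − x₁)` and `(Tx)ₙ = λ_{n+1}·x_{n+2}`
for `n ≥ 1`) satisfies `‖T‖ = 1` and `‖Tx‖ < ‖x‖` for all nonzero `x`, yet
`A_T(x) = (‖x‖² − ‖Tx‖²)^{1/2}` fails the triangle inequality at the first two standard
basis vectors, hence is not a norm. -/
theorem stmt_18 :
    ∃ T : lp (fun _ : ℕ => ℂ) 1 →L[ℂ] lp (fun _ : ℕ => ℂ) 1,
      (∀ x : lp (fun _ : ℕ => ℂ) 1, (T x) 0 = (1 / 2 : ℂ) * (x 0 - x 1)) ∧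
      (∀ (x : lp (fun _ : ℕ => ℂ) 1) (n : ℕ), 1 ≤ n →
        (T x) n = ((2 * (n : ℂ) + 1) / (2 * (n : ℂ) + 2)) * x (n + 2)) ∧
      ‖T‖ = 1 ∧
      (∀ x : lp (fun _ : ℕ => ℂ) 1, x ≠ 0 → ‖T x‖ < ‖x‖) ∧
      (∀ e₁ e₂ : lp (fun _ : ℕ => ℂ) 1,
        (∀ n : ℕ, e₁ n = if n = 0 then 1 else 0) →
        (∀ n : ℕ, e₂ n = if n = 1 then 1 else 0) →
        ¬ Real.sqrt (‖e₁ + e₂‖ ^ 2 - ‖T (e₁ + e₂)‖ ^ 2) ≤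
            Real.sqrt (‖e₁‖ ^ 2 - ‖T e₁‖ ^ 2) + Real.sqrt (‖e₂‖ ^ 2 - ‖T e₂‖ ^ 2)) := by
  refine ⟨Stmt18.T, ?_, ?_, T_norm, T_strict, ?_⟩
  · intro x
    rw [T_apply]
    simp [g]
  · intro x n hn
    rw [T_apply]
    have hn0 : n ≠ 0 := by omega
    simp only [g, if_neg hn0]
    rw [coe_cast]
  · intro e₁ e₂ h1 h2
    have hne1 : ‖e₁‖ = 1 := by
      rw [norm_eq_tsum, tsum_eq_single 0 (fun c hc => by rw [h1 c, if_neg hc, norm_zero])]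
      rw [h1 0]
      simp
    have hne2 : ‖e₂‖ = 1 := by
      rw [norm_eq_tsum, tsum_eq_single 1 (fun c hc => by rw [h2 c, if_neg hc, norm_zero])]
      rw [h2 1]
      simp
    have hTe1 : ‖Stmt18.T e₁‖ = 1/2 := by
      rw [norm_T_apply_eq]
      rw [tsum_eq_single 0 (fun c hc => ?_)]
      · have : g e₁ 0 = (1/2 : ℂ) * (e₁ 0 - e₁ 1) := by simp [g]
        rw [this, h1 0, h1 1]
        simp
      · obtain ⟨m, rfl⟩ : ∃ m, c = m + 1 := ⟨c - 1, by omega⟩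
        have : g e₁ (m + 1) = (r (m + 1) : ℂ) * e₁ (m + 3) := by simp [g]
        rw [this, h1 (m + 3), if_neg (by omega : m + 3 ≠ 0)]
        simp
    have hTe2 : ‖Stmt18.T e₂‖ = 1/2 := by
      rw [norm_T_apply_eq]
      rw [tsum_eq_single 0 (fun c hc => ?_)]
      · have : g e₂ 0 = (1/2 : ℂ) * (e₂ 0 - e₂ 1) := by simp [g]
        rw [this, h2 0, h2 1]
        simp
      · obtain ⟨m, rfl⟩ : ∃ m, c = m + 1 := ⟨c - 1, by omega⟩
        have : g e₂ (m + 1) = (r (m + 1) : ℂ) * e₂ (m + 3) := by simp [g]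
        rw [this, h2 (m + 3), if_neg (by omega : m + 3 ≠ 1)]
        simp
    have hadd : ∀ n : ℕ, (e₁ + e₂) n = (if n = 0 then 1 else 0) + (if n = 1 then 1 else 0) := by
      intro n
      have : (e₁ + e₂) n = e₁ n + e₂ n := by rw [lp.coeFn_add]; rfl
      rw [this, h1 n, h2 n]
    have hTsum : Stmt18.T (e₁ + e₂) = 0 := by
      apply lp.ext
      funext n
      show g (↑(e₁ + e₂)) n = (0 : lp (fun _ : ℕ => ℂ) 1) n
      have hz : ((0 : lp (fun _ : ℕ => ℂ) 1) : ∀ _ : ℕ, ℂ) n = 0 := by simp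
      rw [hz]
      match n with
      | 0 =>
        have : g (↑(e₁ + e₂)) 0 = (1/2 : ℂ) * ((e₁ + e₂) 0 - (e₁ + e₂) 1) := by simp [g]
        rw [this, hadd 0, hadd 1]
        norm_num
      | (m + 1) =>
        have : g (↑(e₁ + e₂)) (m + 1) = (r (m + 1) : ℂ) * (e₁ + e₂) (m + 3) := by simp [g]
        rw [this, hadd (m + 3), if_neg (by omega : m + 3 ≠ 0), if_neg (by omega : m + 3 ≠ 1)]
        simp
    have hTadd : ‖Stmt18.T (e₁ + e₂)‖ = 0 := by rw [hTsum, norm_zero]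
    have hnadd : ‖e₁ + e₂‖ = 2 := by
      rw [norm_eq_tsum]
      rw [tsum_eq_sum (s := ({0, 1} : Finset ℕ)) (fun b hb => ?_)]
      · rw [Finset.sum_insert (by norm_num), Finset.sum_singleton, hadd 0, hadd 1]
        norm_num
      · simp only [Finset.mem_insert, Finset.mem_singleton, not_or] at hb
        rw [hadd b, if_neg hb.1, if_neg hb.2]
        norm_num
    rw [hne1, hne2, hTe1, hTe2, hTadd, hnadd]
    have h34 : Real.sqrt ((1:ℝ)^2 - (1/2)^2) < 1 := by
      have h := Real.sqrt_lt_sqrt (by norm_num : (0:ℝ) ≤ (1:ℝ)^2 - (1/2)^2)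
        (by norm_num : (1:ℝ)^2 - (1/2)^2 < 1)
      simpa using h
    have h4 : Real.sqrt ((2:ℝ)^2 - 0^2) = 2 := by
      rw [show (2:ℝ)^2 - 0^2 = 2^2 by norm_num, Real.sqrt_sq (by norm_num)]
    rw [h4]
    push_neg
    linarith
end
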